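/- On the Hamming graph G = K_2 □ K_2 □ K_4 (Cartesian product of complete graphs of sizes 2, 2, 4), the Laplacian has exactly 5 distinct eigenvalues (0, 2, 4, 6, 8), so every Φ-kernel on G has at most 5 distinct Gram-matrix eigenvalues; yet the Hamming-distance kernel with values k = 10, 6, 4, 3 at Hamming distances 0, 1, 2, 3 respectively has 6 distinct eigenvalues (77, 15, 9, 5, 3, 1). Hence for Hamming graphs with unequal factor sizes, the class of Hamming kernels strictly contains the class of Φ-kernels. -/
import Mathlib


/-- Hamming distance on `{0,1} × {0,1} × {0,1,2,3}`. -/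
def ham11 (x y : Fin 2 × Fin 2 × Fin 4) : ℕ :=
  (if x.1 = y.1 then 0 else 1) + (if x.2.1 = y.2.1 then 0 else 1) +
    (if x.2.2 = y.2.2 then 0 else 1)

/-- Laplacian of the Hamming graph `K_2 □ K_2 □ K_4` (every vertex has degree 5). -/
def L11 : Matrix (Fin 2 × Fin 2 × Fin 4) (Fin 2 × Fin 2 × Fin 4) ℝ :=
  fun x y => if x = y then 5 else if ham11 x y = 1 then -1 else 0

/-- The Hamming-distance kernel with values 10, 6, 4, 3 at distances 0, 1, 2, 3. -/
def K11 : Matrix (Fin 2 × Fin 2 × Fin 4) (Fin 2 × Fin 2 × Fin 4) ℝ :=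
  fun x y => if ham11 x y = 0 then 10 else if ham11 x y = 1 then 6
    else if ham11 x y = 2 then 4 else 3

abbrev Idx11 := Fin 2 × Fin 2 × Fin 4

def FZ11 (j x : Idx11) : ℤ :=
  (if j.1 = 0 ∨ x.1 = 0 then 1 else -1) *
  (if j.2.1 = 0 ∨ x.2.1 = 0 then 1 else -1) *
  (if (j.2.2.val % 2 * (x.2.2.val % 2) + j.2.2.val / 2 * (x.2.2.val / 2)) % 2 = 0 then 1 else -1)

def LZ11 (x y : Idx11) : ℤ := if x = y then 5 else if ham11 x y = 1 then -1 else 0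
def KZ11 (x y : Idx11) : ℤ :=
  if ham11 x y = 0 then 10 else if ham11 x y = 1 then 6 else if ham11 x y = 2 then 4 else 3
def lamLZ11 (j : Idx11) : ℤ := ∑ y, LZ11 ((0,0,0) : Idx11) y * FZ11 j y
def lamKZ11 (j : Idx11) : ℤ := ∑ y, KZ11 ((0,0,0) : Idx11) y * FZ11 j y

/-- real character vectors -/
noncomputable def fR11 (j : Idx11) : Idx11 → ℝ := fun x => (FZ11 j x : ℝ)

lemma castL11 (x y : Idx11) : L11 x y = (LZ11 x y : ℝ) := by
  simp only [L11, LZ11]; split_ifs <;> norm_num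

lemma castK11 (x y : Idx11) : K11 x y = (KZ11 x y : ℝ) := by
  simp only [K11, KZ11]; split_ifs <;> norm_num

lemma eigL11 (j : Idx11) : L11.mulVec (fR11 j) = ((lamLZ11 j : ℝ)) • fR11 j := by
  have h : ∀ j x : Idx11, ∑ y, LZ11 x y * FZ11 j y = lamLZ11 j * FZ11 j x := by decide
  funext x
  have := h j x
  simp only [Matrix.mulVec, dotProduct, Pi.smul_apply, smul_eq_mul, fR11, castL11]
  exact_mod_cast congrArg (Int.cast : ℤ → ℝ) this

lemma eigK11 (j : Idx11) : K11.mulVec (fR11 j) = ((lamKZ11 j : ℝ)) • fR11 j := by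
  have h : ∀ j x : Idx11, ∑ y, KZ11 x y * FZ11 j y = lamKZ11 j * FZ11 j x := by decide
  funext x
  have := h j x
  simp only [Matrix.mulVec, dotProduct, Pi.smul_apply, smul_eq_mul, fR11, castK11]
  exact_mod_cast congrArg (Int.cast : ℤ → ℝ) this

lemma dual11 (x y : Idx11) :
    ∑ j, fR11 j x * fR11 j y = if x = y then (16 : ℝ) else 0 := by
  have h : ∀ x y : Idx11, ∑ j, FZ11 j x * FZ11 j y = if x = y then 16 else 0 := by decide
  have := congrArg (Int.cast : ℤ → ℝ) (h x y)
  push_cast at this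
  simpa [fR11, apply_ite (Int.cast : ℤ → ℝ)] using this

lemma fR11_ne_zero (j : Idx11) : fR11 j ≠ 0 := by
  have h1 : FZ11 j (0 : Idx11) = 1 := by revert j; decide
  intro h
  have := congrFun h (0 : Idx11)
  simp [fR11, h1] at this

/-- generic: eigenvalues of a symmetric matrix diagonalized by the character basis. -/
lemma eig_iff11 (M : Matrix Idx11 Idx11 ℝ) (lam : Idx11 → ℤ)
    (hsym : ∀ x y, M x y = M y x)
    (heig : ∀ j, M.mulVec (fR11 j) = ((lam j : ℝ)) • fR11 j) (μ : ℝ) :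
    (∃ v : Idx11 → ℝ, v ≠ 0 ∧ M.mulVec v = μ • v) ↔ ∃ j, μ = (lam j : ℝ) := by
  constructor
  · rintro ⟨v, hv, hMv⟩
    by_contra hno
    push_neg at hno
    set c : Idx11 → ℝ := fun j => ∑ x, fR11 j x * v x with hc
    have hc0 : ∀ j, c j = 0 := by
      intro j
      have key : (lam j : ℝ) * c j = μ * c j := by
        have e1 : (lam j : ℝ) * c j = ∑ x, (M.mulVec (fR11 j)) x * v x := by
          rw [heig]
          simp only [Pi.smul_apply, smul_eq_mul, hc, Finset.mul_sum]
          exact Finset.sum_congr rfl fun x _ => by ring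
        have e2 : ∑ x, (M.mulVec (fR11 j)) x * v x = ∑ y, fR11 j y * (M.mulVec v) y := by
          simp only [Matrix.mulVec, dotProduct, Finset.sum_mul, Finset.mul_sum]
          rw [Finset.sum_comm]
          exact Finset.sum_congr rfl fun y _ => Finset.sum_congr rfl fun x _ => by
            rw [hsym x y]; ring
        have e3 : ∑ y, fR11 j y * (M.mulVec v) y = μ * c j := by
          rw [hMv]
          simp only [Pi.smul_apply, smul_eq_mul, hc, Finset.mul_sum]
          exact Finset.sum_congr rfl fun y _ => by ring
        rw [e1, e2, e3]
      have : ((lam j : ℝ) - μ) * c j = 0 := by linarith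
      rcases mul_eq_zero.mp this with h | h
      · exact absurd (by linarith : μ = (lam j : ℝ)) (hno j)
      · exact h
    have hv0 : v = 0 := by
      funext x
      have : (16 : ℝ) * v x = ∑ y, (∑ j, fR11 j x * fR11 j y) * v y := by
        rw [show (∑ y, (∑ j, fR11 j x * fR11 j y) * v y)
            = ∑ y, (if x = y then (16:ℝ) else 0) * v y from
          Finset.sum_congr rfl fun y _ => by rw [dual11]]
        simp [Finset.sum_ite_eq]
      have h2 : ∑ y, (∑ j, fR11 j x * fR11 j y) * v y = ∑ j, fR11 j x * c j := by
        simp only [hc, Finset.sum_mul, Finset.mul_sum]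
        rw [Finset.sum_comm]
        exact Finset.sum_congr rfl fun j _ => Finset.sum_congr rfl fun y _ => by ring
      have : (16 : ℝ) * v x = 0 := by
        rw [this, h2]
        simp [hc0]
      have := mul_eq_zero.mp this
      simpa using this
    exact hv hv0
  · rintro ⟨j, rfl⟩
    exact ⟨fR11 j, fR11_ne_zero j, heig j⟩

lemma L11_sym (x y : Idx11) : L11 x y = L11 y x := by
  have : ∀ x y : Idx11, LZ11 x y = LZ11 y x := by decide
  rw [castL11, castL11, this]

lemma K11_sym (x y : Idx11) : K11 x y = K11 y x := by
  have : ∀ x y : Idx11, KZ11 x y = KZ11 y x := by decide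
  rw [castK11, castK11, this]

lemma L11_spec (μ : ℝ) :
    (∃ v : Idx11 → ℝ, v ≠ 0 ∧ L11.mulVec v = μ • v) ↔ μ ∈ ({0, 2, 4, 6, 8} : Set ℝ) := by
  rw [eig_iff11 L11 lamLZ11 L11_sym eigL11]
  have hvals : ∀ j : Idx11, lamLZ11 j = 0 ∨ lamLZ11 j = 2 ∨ lamLZ11 j = 4 ∨
      lamLZ11 j = 6 ∨ lamLZ11 j = 8 := by decide
  have hsurj : (∃ j : Idx11, lamLZ11 j = 0) ∧ (∃ j, lamLZ11 j = 2) ∧ (∃ j, lamLZ11 j = 4) ∧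
      (∃ j, lamLZ11 j = 6) ∧ (∃ j, lamLZ11 j = 8) := by decide
  obtain ⟨⟨j0, h0⟩, ⟨j2, h2⟩, ⟨j4, h4⟩, ⟨j6, h6⟩, ⟨j8, h8⟩⟩ := hsurj
  constructor
  · rintro ⟨j, rfl⟩
    rcases hvals j with h | h | h | h | h <;> rw [h] <;> simp
  · intro hμ
    simp only [Set.mem_insert_iff, Set.mem_singleton_iff] at hμ
    rcases hμ with rfl | rfl | rfl | rfl | rfl
    exacts [⟨j0, by rw [h0]; norm_num⟩,
      ⟨j2, by rw [h2]; norm_num⟩,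
      ⟨j4, by rw [h4]; norm_num⟩,
      ⟨j6, by rw [h6]; norm_num⟩,
      ⟨j8, by rw [h8]; norm_num⟩]

lemma K11_spec (μ : ℝ) :
    (∃ v : Idx11 → ℝ, v ≠ 0 ∧ K11.mulVec v = μ • v) ↔ μ ∈ ({77, 15, 9, 5, 3, 1} : Set ℝ) := by
  rw [eig_iff11 K11 lamKZ11 K11_sym eigK11]
  have hvals : ∀ j : Idx11, lamKZ11 j = 77 ∨ lamKZ11 j = 15 ∨ lamKZ11 j = 9 ∨
      lamKZ11 j = 5 ∨ lamKZ11 j = 3 ∨ lamKZ11 j = 1 := by decide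
  have hsurj : (∃ j : Idx11, lamKZ11 j = 77) ∧ (∃ j, lamKZ11 j = 15) ∧ (∃ j, lamKZ11 j = 9) ∧
      (∃ j, lamKZ11 j = 5) ∧ (∃ j, lamKZ11 j = 3) ∧ (∃ j, lamKZ11 j = 1) := by decide
  obtain ⟨⟨a, ha⟩, ⟨b, hb⟩, ⟨c, hc⟩, ⟨d, hd⟩, ⟨e, he⟩, ⟨g, hg⟩⟩ := hsurj
  constructor
  · rintro ⟨j, rfl⟩
    rcases hvals j with h | h | h | h | h | h <;> rw [h] <;> simp
  · intro hμ
    simp only [Set.mem_insert_iff, Set.mem_singleton_iff] at hμ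
    rcases hμ with rfl | rfl | rfl | rfl | rfl | rfl
    exacts [⟨a, by rw [ha]; norm_num⟩,
      ⟨b, by rw [hb]; norm_num⟩,
      ⟨c, by rw [hc]; norm_num⟩,
      ⟨d, by rw [hd]; norm_num⟩,
      ⟨e, by rw [he]; norm_num⟩,
      ⟨g, by rw [hg]; norm_num⟩]

lemma part3_11 :
    ¬ ∃ (Φ : ℝ → ℝ) (f : Idx11 → Idx11 → ℝ) (lam : Idx11 → ℝ),
        (∀ t, 0 ≤ Φ t) ∧
        (∀ j j', ∑ v, f j v * f j' v = if j = j' then 1 else 0) ∧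
        (∀ j, L11.mulVec (f j) = lam j • f j) ∧
        (∀ x x', K11 x x' = ∑ j, Φ (lam j) * f j x * f j x') := by
  rintro ⟨Φ, f, lam, -, horth, heigL, hKdec⟩
  have hfne : ∀ j, f j ≠ 0 := by
    intro j h
    have := horth j j
    rw [h] at this
    simp at this
  have hlam : ∀ j, lam j ∈ ({0, 2, 4, 6, 8} : Set ℝ) :=
    fun j => (L11_spec (lam j)).mp ⟨f j, hfne j, heigL j⟩
  -- every nonzero eigenvalue of K11 is of the form Φ (lam j)
  have hattain : ∀ μ : ℝ, μ ≠ 0 →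
      (∃ v : Idx11 → ℝ, v ≠ 0 ∧ K11.mulVec v = μ • v) → ∃ j, μ = Φ (lam j) := by
    rintro μ hμ ⟨v, hv, hMv⟩
    by_contra hno
    push_neg at hno
    set c : Idx11 → ℝ := fun j => ∑ x, f j x * v x with hcdef
    have key : ∀ i, Φ (lam i) * c i = μ * c i := by
      intro i
      have e1 : ∑ x, f i x * (K11.mulVec v) x = μ * c i := by
        rw [hMv]
        simp only [Pi.smul_apply, smul_eq_mul, hcdef, Finset.mul_sum]
        exact Finset.sum_congr rfl fun x _ => by ring
      have e2 : ∑ x, f i x * (K11.mulVec v) x = Φ (lam i) * c i := by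
        calc ∑ x, f i x * (K11.mulVec v) x
            = ∑ x, ∑ x', ∑ j, f i x * (Φ (lam j) * f j x * f j x') * v x' := by
              refine Finset.sum_congr rfl fun x _ => ?_
              simp only [Matrix.mulVec, dotProduct, Finset.mul_sum]
              refine Finset.sum_congr rfl fun x' _ => ?_
              rw [hKdec x x', Finset.sum_mul, Finset.mul_sum]
              exact Finset.sum_congr rfl fun j _ => by ring
          _ = ∑ x', ∑ x, ∑ j, f i x * (Φ (lam j) * f j x * f j x') * v x' :=
              Finset.sum_comm
          _ = ∑ x', ∑ j, ∑ x, f i x * (Φ (lam j) * f j x * f j x') * v x' :=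
              Finset.sum_congr rfl fun _ _ => Finset.sum_comm
          _ = ∑ j, ∑ x', ∑ x, f i x * (Φ (lam j) * f j x * f j x') * v x' :=
              Finset.sum_comm
          _ = ∑ j, Φ (lam j) * (∑ x, f i x * f j x) * (∑ x', f j x' * v x') := by
              refine Finset.sum_congr rfl fun j _ => ?_
              simp only [Finset.mul_sum, Finset.sum_mul]
              exact Finset.sum_congr rfl fun x' _ =>
                Finset.sum_congr rfl fun x _ => by ring
          _ = Φ (lam i) * c i := by
              rw [Finset.sum_eq_single i]
              · rw [horth i i]
                simp [hcdef]
              · intro j _ hj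
                rw [horth i j, if_neg (fun h => hj h.symm)]
                ring
              · intro h
                exact absurd (Finset.mem_univ i) h
      rw [← e1, ← e2]
    have hc0 : ∀ i, c i = 0 := by
      intro i
      have h0 : (Φ (lam i) - μ) * c i = 0 := by
        have := key i
        ring_nf
        ring_nf at this
        linarith
      rcases mul_eq_zero.mp h0 with h | h
      · exact absurd (by linarith : μ = Φ (lam i)) (hno i)
      · exact h
    have hKv0 : K11.mulVec v = 0 := by
      funext x
      have e3 : (K11.mulVec v) x = ∑ j, Φ (lam j) * f j x * c j := by
        calc (K11.mulVec v) x = ∑ x', ∑ j, (Φ (lam j) * f j x * f j x') * v x' := by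
              simp only [Matrix.mulVec, dotProduct]
              refine Finset.sum_congr rfl fun x' _ => ?_
              rw [hKdec x x', Finset.sum_mul]
          _ = ∑ j, ∑ x', (Φ (lam j) * f j x * f j x') * v x' := Finset.sum_comm
          _ = ∑ j, Φ (lam j) * f j x * c j := by
              refine Finset.sum_congr rfl fun j _ => ?_
              rw [hcdef]
              simp only [Finset.mul_sum]
              exact Finset.sum_congr rfl fun x' _ => by ring
      rw [e3]
      simp [hc0]
    rw [hKv0] at hMv
    rcases smul_eq_zero.mp hMv.symm with h | h
    · exact hμ h
    · exact hv h
  obtain ⟨j1, h1⟩ := hattain 77 (by norm_num) ((K11_spec 77).mpr (by simp))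
  obtain ⟨j2, h2⟩ := hattain 15 (by norm_num) ((K11_spec 15).mpr (by simp))
  obtain ⟨j3, h3⟩ := hattain 9 (by norm_num) ((K11_spec 9).mpr (by simp))
  obtain ⟨j4, h4⟩ := hattain 5 (by norm_num) ((K11_spec 5).mpr (by simp))
  obtain ⟨j5, h5⟩ := hattain 3 (by norm_num) ((K11_spec 3).mpr (by simp))
  obtain ⟨j6, h6⟩ := hattain 1 (by norm_num) ((K11_spec 1).mpr (by simp))
  set t : Fin 6 → ℝ := ![lam j1, lam j2, lam j3, lam j4, lam j5, lam j6] with ht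
  have hmem : ∀ a : Fin 6, t a ∈ ({0, 2, 4, 6, 8} : Finset ℝ) := by
    intro a
    have : ∀ j, lam j ∈ ({0, 2, 4, 6, 8} : Finset ℝ) := by
      intro j
      have := hlam j
      simp only [Set.mem_insert_iff, Set.mem_singleton_iff] at this
      simp only [Finset.mem_insert, Finset.mem_singleton]
      exact this
    fin_cases a <;> simp only [ht] <;>
      first
        | exact this j1 | exact this j2 | exact this j3
        | exact this j4 | exact this j5 | exact this j6
  have hΦt : ∀ a : Fin 6, Φ (t a) = ![(77:ℝ), 15, 9, 5, 3, 1] a := by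
    intro a
    fin_cases a <;> simp only [ht] <;>
      first
        | exact h1.symm | exact h2.symm | exact h3.symm
        | exact h4.symm | exact h5.symm | exact h6.symm
  have hinj : Function.Injective t := by
    intro a b hab
    have hub : (![(77:ℝ), 15, 9, 5, 3, 1]) a = (![(77:ℝ), 15, 9, 5, 3, 1]) b := by
      rw [← hΦt a, ← hΦt b, hab]
    fin_cases a <;> fin_cases b <;> first | rfl | (exfalso; norm_num at hub)
  have hcard : (Finset.univ : Finset (Fin 6)).card ≤ ({0, 2, 4, 6, 8} : Finset ℝ).card :=
    Finset.card_le_card_of_injOn t (fun a _ => hmem a) (Function.Injective.injOn hinj)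
  have h5' : ({0, 2, 4, 6, 8} : Finset ℝ).card ≤ 5 := by
    refine le_trans (Finset.card_insert_le _ _) ?_
    refine le_trans (Nat.add_le_add_right (Finset.card_insert_le _ _) 1) ?_
    refine le_trans (Nat.add_le_add_right (Nat.add_le_add_right (Finset.card_insert_le _ _) 1) 1) ?_
    refine le_trans (Nat.add_le_add_right (Nat.add_le_add_right (Nat.add_le_add_right
      (Finset.card_insert_le _ _) 1) 1) 1) ?_
    simp
  have : (6 : ℕ) ≤ 5 := by
    have hu : (Finset.univ : Finset (Fin 6)).card = 6 := by simp
    omega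
  omega

/-- the Laplacian of `K_2 □ K_2 □ K_4` has exactly the 5 distinct eigenvalues
0, 2, 4, 6, 8, while the Hamming kernel `K11` has the 6 distinct eigenvalues
77, 15, 9, 5, 3, 1; hence `K11` is a Hamming kernel that is not a Φ-kernel, so for unequal
factor sizes the Hamming kernels strictly contain the Φ-kernels. -/
theorem stmt_11 :
    (∀ μ : ℝ, (∃ v : Fin 2 × Fin 2 × Fin 4 → ℝ, v ≠ 0 ∧ L11.mulVec v = μ • v) ↔
      μ ∈ ({0, 2, 4, 6, 8} : Set ℝ)) ∧
    (∀ μ : ℝ, (∃ v : Fin 2 × Fin 2 × Fin 4 → ℝ, v ≠ 0 ∧ K11.mulVec v = μ • v) ↔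
      μ ∈ ({77, 15, 9, 5, 3, 1} : Set ℝ)) ∧
    ¬ ∃ (Φ : ℝ → ℝ) (f : Fin 2 × Fin 2 × Fin 4 → Fin 2 × Fin 2 × Fin 4 → ℝ)
        (lam : Fin 2 × Fin 2 × Fin 4 → ℝ),
        (∀ t, 0 ≤ Φ t) ∧
        (∀ j j', ∑ v, f j v * f j' v = if j = j' then 1 else 0) ∧
        (∀ j, L11.mulVec (f j) = lam j • f j) ∧
        (∀ x x', K11 x x' = ∑ j, Φ (lam j) * f j x * f j x') := by
  exact ⟨L11_spec, K11_spec, part3_11⟩
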